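/- Let (F_i)_{i∈ℤ} be independent random variables, all with the same distribution as R, and define the event 𝒱 = ⋂_{n≥0} ⋃_{j≥0} {F_{n−j} ≥ j+1}. If R has finite expectation (equivalently, ∑_{n=1}^{∞} P(R ≥ n) < ∞), then P(𝒱) = 0. -/

import Mathlib

open MeasureTheory ProbabilityTheory Filter Topology
open scoped ENNReal

private lemma one_sub_add_le_mul (a b : ℝ≥0∞) : 1 - (a + b) ≤ (1 - a) * (1 - b) := by
  rcases le_or_gt 1 (a + b) with h | h
  · simp [tsub_eq_zero_of_le h]
  · have hab := h.le
    have ha : a ≤ 1 := le_trans (le_add_right le_rfl) hab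
    have hb : b ≤ 1 := le_trans (le_add_left le_rfl) hab
    rw [tsub_le_iff_right]
    calc (1:ℝ≥0∞) = (1 - a) * ((1 - b) + b) + a := by
          rw [tsub_add_cancel_of_le hb, mul_one, tsub_add_cancel_of_le ha]
      _ = (1 - a) * (1 - b) + (1 - a) * b + a := by rw [mul_add]
      _ ≤ (1 - a) * (1 - b) + 1 * b + a := by gcongr; exact tsub_le_self
      _ = (1 - a) * (1 - b) + (a + b) := by rw [one_mul]; ring

private lemma one_sub_sum_le_prod_one_sub {ι : Type*} (s : Finset ι) (x : ι → ℝ≥0∞) :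
    1 - ∑ i ∈ s, x i ≤ ∏ i ∈ s, (1 - x i) := by
  classical
  induction s using Finset.induction_on with
  | empty => simp
  | @insert a s' ha ih =>
    rw [Finset.sum_insert ha, Finset.prod_insert ha]
    calc 1 - (x a + ∑ i ∈ s', x i) ≤ (1 - x a) * (1 - ∑ i ∈ s', x i) :=
          one_sub_add_le_mul _ _
      _ ≤ (1 - x a) * ∏ i ∈ s', (1 - x i) := by gcongr

/-- **Firework Process on ℤ with all vertices `i ≤ 0` initially active.**
With `𝒱 = ⋂_{n≥0} ⋃_{j≥0} {F_{n-j} ≥ j+1}`, if `R` has finite expectation,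
i.e. `∑_{n=1}^∞ P(R ≥ n) < ∞`, then `P(𝒱) = 0`. -/
theorem firework_halfline_death_of_finite_expectation
    {Ω : Type*} [MeasurableSpace Ω] (P : Measure Ω) [IsProbabilityMeasure P]
    (F : ℤ → Ω → ℕ) (R₀ : Ω → ℕ)
    (hmeas : ∀ i, Measurable (F i)) (hmeas₀ : Measurable R₀)
    (hindep : iIndepFun F P)
    (hid : ∀ i, IdentDistrib (F i) R₀ P P)
    (h0 : 0 < P {ω | R₀ ω < 1}) (h1 : P {ω | R₀ ω < 1} < 1)
    (𝒱 : Set Ω)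
    (h𝒱 : 𝒱 = ⋂ (n : ℕ), ⋃ (j : ℕ), {ω | j + 1 ≤ F ((n : ℤ) - (j : ℤ)) ω})
    (hE : (∑' n : ℕ, P {ω | n + 1 ≤ R₀ ω}) ≠ ⊤) :
    P 𝒱 = 0 := by
  classical
  set t : ℕ → ℝ≥0∞ := fun n => P {ω | n + 1 ≤ R₀ ω} with ht
  set p : ℝ≥0∞ := P {ω | R₀ ω < 1} with hp
  have hms : ∀ s : Set ℕ, MeasurableSet s := fun s => trivial
  -- basic facts about t
  have hlt : ∀ i : ℕ, P {ω | R₀ ω < i + 1} = 1 - t i := by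
    intro i
    have hm : MeasurableSet {ω | i + 1 ≤ R₀ ω} := hmeas₀ (hms {x | i + 1 ≤ x})
    have hset : {ω | R₀ ω < i + 1} = {ω | i + 1 ≤ R₀ ω}ᶜ := by
      ext ω; simp [not_le]
    rw [hset, prob_compl_eq_one_sub hm]
  have htmono : ∀ i : ℕ, t i ≤ t 0 := by
    intro i
    apply measure_mono
    intro ω hω
    simp only [Set.mem_setOf_eq] at hω ⊢
    omega
  have ht0 : t 0 = 1 - p := by
    have hm : MeasurableSet {ω | R₀ ω < 1} := hmeas₀ (hms {x | x < 1})
    have hset : {ω | 0 + 1 ≤ R₀ ω} = {ω | R₀ ω < 1}ᶜ := by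
      ext ω; simp only [Set.mem_setOf_eq, Set.mem_compl_iff, not_lt]
    calc t 0 = P {ω | R₀ ω < 1}ᶜ := by rw [ht]; simp only [hset]
      _ = 1 - p := by rw [prob_compl_eq_one_sub hm]
  have hpt : ∀ i : ℕ, p ≤ 1 - t i := by
    intro i
    have h00 : (1:ℝ≥0∞) - t 0 = p := by
      rw [ht0, ENNReal.sub_sub_cancel ENNReal.one_ne_top prob_le_one]
    calc p = 1 - t 0 := h00.symm
      _ ≤ 1 - t i := tsub_le_tsub_left (htmono i) 1
  -- choose M with small tail
  obtain ⟨M, hM⟩ : ∃ M, ∑' i, t (i + M) < 1 :=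
    ((ENNReal.tendsto_sum_nat_add t hE).eventually_lt_const (by norm_num)).exists
  set S : ℝ≥0∞ := ∑' i, t (i + M) with hS
  set c : ℝ≥0∞ := p ^ (M + 1) * (1 - S) with hc
  have hc0 : c ≠ 0 := by
    apply mul_ne_zero (pow_ne_zero _ h0.ne')
    intro h
    exact absurd (tsub_eq_zero_iff_le.mp h) (not_le.mpr hM)
  have hc1 : c ≤ 1 := mul_le_one' (pow_le_one' prob_le_one _) tsub_le_self
  -- the key finite-stage estimate
  have key : ∀ N K : ℕ, M ≤ K →
      P 𝒱 ≤ (1 - c) ^ N + N * ∑' i, t (i + (K + 1)) := by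
    intro N K hK
    set nk : ℕ → ℕ := fun k => k * (K + 1) + K with hnk
    set A : ℕ → Set Ω := fun k =>
      ⋂ m ∈ Finset.range (K + 1), F ((nk k : ℤ) - (m : ℤ)) ⁻¹' {x | x < max m 1} with hA
    set U : ℕ → Set Ω := fun k =>
      ⋃ j : ℕ, {ω | (j + (K + 1)) + 1 ≤ F ((nk k : ℤ) - ((j + (K + 1) : ℕ) : ℤ)) ω} with hU
    have hAmeas : ∀ k, MeasurableSet (A k) :=
      fun k => Finset.measurableSet_biInter _ fun m _ => hmeas _ (hms _)
    -- lower bound on P(A k)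
    have hAge : ∀ k, c ≤ P (A k) := by
      intro k
      have hprod :
          P (A k) = ∏ m ∈ Finset.range (K + 1), P {ω | R₀ ω < max m 1} := by
        have hmain := hindep.measure_inter_preimage_eq_mul
          (S := (Finset.range (K + 1)).image (fun m : ℕ => (nk k : ℤ) - (m : ℤ)))
          (sets := fun i : ℤ => {x : ℕ | x < max ((nk k : ℤ) - i).toNat 1})
          (fun i _ => hms _)
        have hset : (⋂ i ∈ (Finset.range (K + 1)).image (fun m : ℕ => (nk k : ℤ) - (m : ℤ)),
            F i ⁻¹' {x : ℕ | x < max ((nk k : ℤ) - i).toNat 1}) = A k := by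
          rw [Finset.set_biInter_finset_image]
          apply Set.iInter₂_congr
          intro m hm
          have hm' : ((nk k : ℤ) - ((nk k : ℤ) - (m : ℤ))).toNat = m := by omega
          rw [hm']
        have hprodeq : ∏ i ∈ (Finset.range (K + 1)).image (fun m : ℕ => (nk k : ℤ) - (m : ℤ)),
            P (F i ⁻¹' {x : ℕ | x < max ((nk k : ℤ) - i).toNat 1})
            = ∏ m ∈ Finset.range (K + 1), P {ω | R₀ ω < max m 1} := by
          rw [Finset.prod_image (by intro x _ y _ hxy; exact_mod_cast sub_right_injective hxy)]
          apply Finset.prod_congr rfl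
          intro m hm
          have hm' : ((nk k : ℤ) - ((nk k : ℤ) - (m : ℤ))).toNat = m := by omega
          rw [hm']
          exact (hid _).measure_mem_eq (hms _)
        rw [hset, hprodeq] at hmain
        exact hmain
      rw [hprod]
      have hfac0 : P {ω | R₀ ω < max 0 1} = p := by
        rw [show (max 0 1 : ℕ) = 1 from rfl]
      have hfacS : ∀ i : ℕ, P {ω | R₀ ω < max (i + 1) 1} = 1 - t i := by
        intro i
        have hmax : max (i + 1) 1 = i + 1 := by omega
        rw [hmax, hlt]
      rw [Finset.prod_range_succ']
      rw [hfac0]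
      have hrw : ∏ i ∈ Finset.range K, P {ω | R₀ ω < max (i + 1) 1}
          = ∏ i ∈ Finset.range K, (1 - t i) := Finset.prod_congr rfl fun i _ => hfacS i
      rw [hrw]
      have hsplit : ∏ i ∈ Finset.range K, (1 - t i)
          = (∏ i ∈ Finset.range M, (1 - t i)) * ∏ i ∈ Finset.Ico M K, (1 - t i) :=
        (Finset.prod_range_mul_prod_Ico _ hK).symm
      have hfirst : p ^ M ≤ ∏ i ∈ Finset.range M, (1 - t i) := by
        calc p ^ M = ∏ _i ∈ Finset.range M, p := by
              rw [Finset.prod_const, Finset.card_range]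
          _ ≤ ∏ i ∈ Finset.range M, (1 - t i) :=
              Finset.prod_le_prod' fun i _ => hpt i
      have hsecond : 1 - S ≤ ∏ i ∈ Finset.Ico M K, (1 - t i) := by
        refine le_trans ?_ (one_sub_sum_le_prod_one_sub _ _)
        apply tsub_le_tsub_left
        calc ∑ i ∈ Finset.Ico M K, t i = ∑ i ∈ Finset.range (K - M), t (M + i) := by
              rw [Finset.sum_Ico_eq_sum_range]
          _ = ∑ i ∈ Finset.range (K - M), t (i + M) := by
              apply Finset.sum_congr rfl; intro i _; rw [add_comm]
          _ ≤ ∑' i, t (i + M) := ENNReal.sum_le_tsum _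
      calc c = p ^ (M + 1) * (1 - S) := rfl
        _ = (p ^ M * (1 - S)) * p := by ring
        _ ≤ ((∏ i ∈ Finset.range M, (1 - t i)) * ∏ i ∈ Finset.Ico M K, (1 - t i)) * p := by
            gcongr
        _ = (∏ i ∈ Finset.range K, (1 - t i)) * p := by rw [← hsplit]
    -- product bound over blocks
    have hBC : ∀ n : ℕ, P (⋂ k ∈ Finset.range n, (A k)ᶜ) ≤ (1 - c) ^ n := by
      intro n
      induction n with
      | zero => simp
      | succ n ih =>
        set B : Set Ω := ⋂ k ∈ Finset.range n, (A k)ᶜ with hB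
        have hBmeas : MeasurableSet B :=
          Finset.measurableSet_biInter _ fun k _ => (hAmeas k).compl
        have hsplit : ⋂ k ∈ Finset.range (n + 1), (A k)ᶜ = B \ A n := by
          rw [Finset.range_add_one, Finset.set_biInter_insert, Set.diff_eq, Set.inter_comm]
        rw [hsplit]
        -- independence of A n and B
        have hIndep2 : Indep
            (⨆ i ∈ Set.Iio ((n * (K + 1) : ℕ) : ℤ), MeasurableSpace.comap (F i) inferInstance)
            (⨆ i ∈ Set.Ici ((n * (K + 1) : ℕ) : ℤ), MeasurableSpace.comap (F i) inferInstance)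
            P := by
          apply indep_iSup_of_disjoint (fun i => (hmeas i).comap_le) hindep
          exact Set.Iio_disjoint_Ici le_rfl
        have hsetA : MeasurableSet[⨆ i ∈ Set.Ici ((n * (K + 1) : ℕ) : ℤ),
            MeasurableSpace.comap (F i) inferInstance] (A n) := by
          apply Finset.measurableSet_biInter
          intro m hm
          simp only [Finset.mem_range] at hm
          have hi : ((nk n : ℤ) - (m : ℤ)) ∈ Set.Ici ((n * (K + 1) : ℕ) : ℤ) := by
            simp only [Set.mem_Ici, hnk]; push_cast; omega
          exact le_iSup₂ (f := fun i (_ : i ∈ Set.Ici ((n * (K + 1) : ℕ) : ℤ)) =>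
            MeasurableSpace.comap (F i) inferInstance) _ hi _
            ⟨{x : ℕ | x < max m 1}, trivial, rfl⟩
        have hsetB : MeasurableSet[⨆ i ∈ Set.Iio ((n * (K + 1) : ℕ) : ℤ),
            MeasurableSpace.comap (F i) inferInstance] B := by
          apply Finset.measurableSet_biInter
          intro k hk
          simp only [Finset.mem_range] at hk
          apply MeasurableSet.compl
          apply Finset.measurableSet_biInter
          intro m hm
          simp only [Finset.mem_range] at hm
          have hi : ((nk k : ℤ) - (m : ℤ)) ∈ Set.Iio ((n * (K + 1) : ℕ) : ℤ) := by
            simp only [Set.mem_Iio, hnk]; push_cast; nlinarith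
          exact le_iSup₂ (f := fun i (_ : i ∈ Set.Iio ((n * (K + 1) : ℕ) : ℤ)) =>
            MeasurableSpace.comap (F i) inferInstance) _ hi _
            ⟨{x : ℕ | x < max m 1}, trivial, rfl⟩
        have hIS : IndepSet B (A n) P :=
          Indep.indepSet_of_measurableSet hIndep2 hsetB hsetA
        have hmul : P (B ∩ A n) = P B * P (A n) := hIS.measure_inter_eq_mul
        have hdiff : P (B \ A n) = P B - P (B ∩ A n) := by
          refine ENNReal.eq_sub_of_add_eq (measure_ne_top P _) ?_
          rw [add_comm]
          exact measure_inter_add_diff B (hAmeas n)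
        rw [hdiff]
        calc P B - P (B ∩ A n) ≤ P B - c * P B := by
              apply tsub_le_tsub_left
              rw [hmul, mul_comm (P B) (P (A n))]
              exact mul_le_mul_left (hAge n) _
          _ ≤ (1 - c) * P B := by
              rw [tsub_le_iff_right]
              refine le_of_eq ?_
              calc P B = 1 * P B := (one_mul _).symm
                _ = ((1 - c) + c) * P B := by rw [tsub_add_cancel_of_le hc1]
                _ = (1 - c) * P B + c * P B := by rw [add_mul]
          _ ≤ (1 - c) * (1 - c) ^ n := by gcongr
          _ = (1 - c) ^ (n + 1) := by rw [pow_succ, mul_comm]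
    -- the inclusion
    have hincl : 𝒱 ⊆ (⋂ k ∈ Finset.range N, (A k)ᶜ) ∪ ⋃ k ∈ Finset.range N, U k := by
      intro ω hω
      by_cases hu : ω ∈ ⋃ k ∈ Finset.range N, U k
      · exact Or.inr hu
      · refine Or.inl (Set.mem_iInter₂.mpr ?_)
        intro k hk
        simp only [Set.mem_compl_iff]
        intro hAk
        rw [h𝒱] at hω
        have hωn := Set.mem_iInter.mp hω (nk k)
        obtain ⟨j, hj⟩ := Set.mem_iUnion.mp hωn
        simp only [Set.mem_setOf_eq] at hj
        rcases le_or_gt j K with hjK | hjK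
        · have hmem := Set.mem_iInter₂.mp hAk j (Finset.mem_range.mpr (by omega))
          simp only [Set.mem_preimage, Set.mem_setOf_eq] at hmem
          have : max j 1 ≤ j + 1 := by omega
          omega
        · apply hu
          refine Set.mem_biUnion hk ?_
          rw [hU]
          refine Set.mem_iUnion.mpr ⟨j - (K + 1), ?_⟩
          simp only [Set.mem_setOf_eq]
          have h1' : ((j - (K + 1)) + (K + 1)) + 1 = j + 1 := by omega
          have h2' : ((j - (K + 1)) + (K + 1) : ℕ) = j := by omega
          rw [h1', h2']
          exact hj
    -- measure of the union part
    have hUle : ∀ k, P (U k) ≤ ∑' i, t (i + (K + 1)) := by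
      intro k
      rw [hU]
      refine le_trans (measure_iUnion_le _) ?_
      apply ENNReal.tsum_le_tsum
      intro j
      have heq : P {ω | (j + (K + 1)) + 1 ≤ F ((nk k : ℤ) - ((j + (K + 1) : ℕ) : ℤ)) ω}
          = t (j + (K + 1)) := by
        exact (hid ((nk k : ℤ) - ((j + (K + 1) : ℕ) : ℤ))).measure_mem_eq
          (s := {x : ℕ | (j + (K + 1)) + 1 ≤ x}) (hms _)
      exact le_of_eq heq
    calc P 𝒱 ≤ P ((⋂ k ∈ Finset.range N, (A k)ᶜ) ∪ ⋃ k ∈ Finset.range N, U k) :=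
          measure_mono hincl
      _ ≤ P (⋂ k ∈ Finset.range N, (A k)ᶜ) + P (⋃ k ∈ Finset.range N, U k) :=
          measure_union_le _ _
      _ ≤ (1 - c) ^ N + ∑ k ∈ Finset.range N, P (U k) := by
          gcongr
          · exact hBC N
          · exact measure_biUnion_finset_le _ _
      _ ≤ (1 - c) ^ N + ∑ k ∈ Finset.range N, ∑' i, t (i + (K + 1)) := by
          gcongr with k hk
          exact hUle k
      _ = (1 - c) ^ N + N * ∑' i, t (i + (K + 1)) := by
          rw [Finset.sum_const, Finset.card_range, nsmul_eq_mul]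
  -- take K → ∞ for fixed N
  have hN : ∀ N : ℕ, P 𝒱 ≤ (1 - c) ^ N := by
    intro N
    have htail : Tendsto (fun K : ℕ => ∑' i, t (i + (K + 1))) atTop (𝓝 0) :=
      (ENNReal.tendsto_sum_nat_add t hE).comp (tendsto_add_atTop_nat 1)
    have hlim : Tendsto (fun K : ℕ => (1 - c) ^ N + N * ∑' i, t (i + (K + 1)))
        atTop (𝓝 ((1 - c) ^ N)) := by
      have h2 : Tendsto (fun K : ℕ => (N : ℝ≥0∞) * ∑' i, t (i + (K + 1))) atTop (𝓝 0) := by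
        have h3 := ENNReal.Tendsto.const_mul htail (Or.inr (ENNReal.natCast_ne_top N))
        simpa using h3
      have h4 := h2.const_add ((1 - c) ^ N)
      simpa using h4
    refine ge_of_tendsto hlim ?_
    filter_upwards [eventually_ge_atTop M] with K hK
    exact key N K hK
  -- take N → ∞
  have hlast : Tendsto (fun N : ℕ => (1 - c) ^ N) atTop (𝓝 0) :=
    ENNReal.tendsto_pow_atTop_nhds_zero_of_lt_one
      (ENNReal.sub_lt_self ENNReal.one_ne_top one_ne_zero hc0)
  have hfin : P 𝒱 ≤ 0 := ge_of_tendsto hlast (Eventually.of_forall hN)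
  exact le_antisymm hfin zero_le
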